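/- arXiv:1810.03306 — 3 statements merged into one kernel-verified Lean document; each statement's English description precedes it below -/
import Mathlib

section
/- Let G be a finite simple connected graph that contains an induced subgraph isomorphic to the claw K_{1,3}. Then G has a connected dominating set D with |D| = 2k + 4 for some nonnegative integer k such that the stability number of the induced subgraph G[D] is at least k + 3; in particular |D| ≤ 2α(G[D]) − 2 ≤ 2α(G) − 2. -/
/-- A set of vertices is a stable (independent) set if its vertices are pairwise nonadjacent. -/
def SimpleGraph.IsStableSet {V : Type*} (G : SimpleGraph V) (s : Finset V) : Prop :=
  ∀ u ∈ s, ∀ v ∈ s, ¬ G.Adj u v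

/-- The stability (independence) number of a graph: the size of a largest stable set. -/
noncomputable def SimpleGraph.stabilityNumber {V : Type*} (G : SimpleGraph V) : ℕ :=
  sSup {n | ∃ s : Finset V, G.IsStableSet s ∧ s.card = n}

/-- A set of vertices is dominating if every vertex is in it or adjacent to one of its
vertices. -/
def SimpleGraph.IsDominatingSet {V : Type*} (G : SimpleGraph V) (D : Finset V) : Prop :=
  ∀ v : V, v ∈ D ∨ ∃ u ∈ D, G.Adj u v

lemma bddAbove_stab {V : Type*} [Fintype V] (G : SimpleGraph V) :
    BddAbove {n | ∃ s : Finset V, G.IsStableSet s ∧ s.card = n} :=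
  ⟨Fintype.card V, fun n ⟨s, _, hc⟩ => hc ▸ s.card_le_univ⟩

lemma le_stab {V : Type*} [Fintype V] (G : SimpleGraph V) {s : Finset V}
    (hs : G.IsStableSet s) : s.card ≤ G.stabilityNumber :=
  le_csSup (bddAbove_stab G) ⟨s, hs, rfl⟩

lemma crossing {V : Type*} (G : SimpleGraph V) (N : Set V) :
    ∀ {a b : V}, G.Walk a b → a ∉ N → b ∈ N →
      ∃ x w, G.Adj x w ∧ x ∉ N ∧ w ∈ N := by
  intro a b p
  induction p with
  | nil => intro h h'; exact absurd h' h
  | @cons u v _ h p ih =>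
    intro ha hb
    by_cases hm : v ∈ N
    · exact ⟨u, v, h, ha, hm⟩
    · exact ih hm hb

lemma grow {V : Type*} [Fintype V] [DecidableEq V] (G : SimpleGraph V) (hconn : G.Connected) :
    ∀ n (D S : Finset V) (k : ℕ), Fintype.card V ≤ n + D.card →
      S ⊆ D → G.IsStableSet S → (G.induce (D : Set V)).Connected →
      D.card = 2 * k + 4 → S.card = k + 3 →
      ∃ (D' S' : Finset V) (k' : ℕ), G.IsDominatingSet D' ∧
        (G.induce (D' : Set V)).Connected ∧
        D'.card = 2 * k' + 4 ∧ S' ⊆ D' ∧ G.IsStableSet S' ∧ S'.card = k' + 3 := by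
  intro n
  induction n with
  | zero =>
    intro D S k hcard hSD hS hDconn hDc hSc
    refine ⟨D, S, k, fun v => Or.inl ?_, hDconn, hDc, hSD, hS, hSc⟩
    have : D = Finset.univ :=
      Finset.eq_univ_of_card D (le_antisymm D.card_le_univ (by simpa using hcard))
    simp [this]
  | succ n ih =>
    intro D S k hcard hSD hS hDconn hDc hSc
    by_cases hdom : G.IsDominatingSet D
    · exact ⟨D, S, k, hdom, hDconn, hDc, hSD, hS, hSc⟩
    · simp only [SimpleGraph.IsDominatingSet, not_forall, not_or, not_exists] at hdom
      obtain ⟨v, hvD, hvadj⟩ := hdom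
      set N : Set V := {z | z ∈ D ∨ ∃ u ∈ D, G.Adj u z} with hN
      have hvN : v ∉ N := by
        intro h
        rcases h with h | ⟨u, hu, hadj⟩
        · exact hvD h
        · exact hvadj u ⟨hu, hadj⟩
      have hDne : D.Nonempty := Finset.card_pos.mp (by omega)
      obtain ⟨d, hdD⟩ := hDne
      obtain ⟨p⟩ := hconn.preconnected v d
      obtain ⟨x, w, hxw, hxN, hwN⟩ := crossing G N p hvN (Or.inl hdD)
      have hxD : x ∉ D := fun h => hxN (Or.inl h)
      have hxnadj : ∀ u ∈ D, ¬ G.Adj u x := fun u hu hadj => hxN (Or.inr ⟨u, hu, hadj⟩)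
      have hwD : w ∉ D := fun h => hxnadj w h hxw.symm
      obtain ⟨d', hd'D, hd'w⟩ : ∃ u ∈ D, G.Adj u w := by
        rcases hwN with h | h
        · exact absurd h hwD
        · exact h
      have hxw' : x ≠ w := fun h => hxN (h ▸ hwN)
      set D' : Finset V := insert x (insert w D) with hD'
      set S' : Finset V := insert x S with hS'
      have hxS : x ∉ S := fun h => hxD (hSD h)
      have hD'c : D'.card = 2 * (k + 1) + 4 := by
        rw [hD', Finset.card_insert_of_notMem (by simp [hxw', hxD]),
          Finset.card_insert_of_notMem hwD]
        omega
      have hS'c : S'.card = (k + 1) + 3 := by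
        rw [hS', Finset.card_insert_of_notMem hxS]; omega
      have hS'D' : S' ⊆ D' := by
        intro z hz
        rcases Finset.mem_insert.mp hz with rfl | hz
        · exact Finset.mem_insert_self _ _
        · exact Finset.mem_insert_of_mem (Finset.mem_insert_of_mem (hSD hz))
      have hS'stab : G.IsStableSet S' := by
        intro u hu z hz
        rw [hS', Finset.mem_insert] at hu hz
        rcases hu with rfl | hu
        · rcases hz with rfl | hz
          · exact G.loopless.irrefl _
          · exact fun h => hxnadj z (hSD hz) h.symm
        · rcases hz with rfl | hz
          · exact fun h => hxnadj u (hSD hu) h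
          · exact hS u hu z hz
      have hsub : (D : Set V) ⊆ (D' : Set V) := by
        intro z hz
        simp only [hD', Finset.coe_insert, Set.mem_insert_iff]
        exact Or.inr (Or.inr hz)
      have hwD' : w ∈ (D' : Set V) := by simp [hD']
      have hxD' : x ∈ (D' : Set V) := by simp [hD']
      have hd'D' : d' ∈ (D' : Set V) := hsub hd'D
      have key : ∀ a : (D' : Set V), (G.induce (D' : Set V)).Reachable a ⟨w, hwD'⟩ := by
        rintro ⟨a, ha⟩
        have ha' : a = x ∨ a = w ∨ a ∈ D := by
          simpa [hD'] using ha
        rcases ha' with rfl | rfl | haD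
        · exact SimpleGraph.Adj.reachable (by exact hxw)
        · exact SimpleGraph.Reachable.refl _
        · have h1 : (G.induce (D : Set V)).Reachable ⟨a, haD⟩ ⟨d', hd'D⟩ :=
            hDconn.preconnected _ _
          have h2 := h1.map (SimpleGraph.induceHomOfLE G hsub).toHom
          exact SimpleGraph.Reachable.trans h2 (SimpleGraph.Adj.reachable (by exact hd'w))
      have hD'conn : (G.induce (D' : Set V)).Connected := by
        rw [SimpleGraph.connected_iff]
        exact ⟨fun a b => (key a).trans (key b).symm, ⟨⟨w, hwD'⟩⟩⟩
      exact ih D' S' (k + 1) (by omega) hS'D' hS'stab hD'conn hD'c hS'c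

/-- If `G` is a finite simple connected graph containing an induced claw `K_{1,3}`,
then `G` has a connected dominating set `D` with `|D| = 2k + 4` for some `k ≥ 0`, such
that the stability number of `G[D]` is at least `k + 3`; in particular
`|D| ≤ 2 α(G[D]) - 2 ≤ 2 α(G) - 2`. -/
theorem exists_connected_dominating_set_of_claw {V : Type*} [Fintype V] [DecidableEq V]
    (G : SimpleGraph V) (hconn : G.Connected)
    (hclaw : Nonempty (completeBipartiteGraph (Fin 1) (Fin 3) ↪g G)) :
    ∃ (D : Finset V) (k : ℕ),
      G.IsDominatingSet D ∧ (G.induce (D : Set V)).Connected ∧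
      D.card = 2 * k + 4 ∧
      k + 3 ≤ (G.induce (D : Set V)).stabilityNumber ∧
      D.card ≤ 2 * (G.induce (D : Set V)).stabilityNumber - 2 ∧
      2 * (G.induce (D : Set V)).stabilityNumber - 2 ≤ 2 * G.stabilityNumber - 2 := by
  obtain ⟨e⟩ := hclaw
  set c : V := e (Sum.inl 0) with hc
  set a : Fin 3 → V := fun i => e (Sum.inr i) with ha
  have hadj : ∀ i, G.Adj c (a i) := fun i => e.map_rel_iff.mpr (by simp)
  have hnadj : ∀ i j, ¬ G.Adj (a i) (a j) := by
    intro i j h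
    have := e.map_rel_iff.mp h
    simp at this
  have hane : ∀ i j, i ≠ j → a i ≠ a j := by
    intro i j hij h
    exact hij (by simpa using Sum.inr.inj (e.injective h))
  have hca : ∀ i, c ≠ a i := fun i => (hadj i).ne
  set S0 : Finset V := {a 0, a 1, a 2} with hS0
  set D0 : Finset V := insert c S0 with hD0
  have hS0c : S0.card = 3 := by
    rw [hS0, Finset.card_insert_of_notMem (by simp [hane 0 1 (by decide), hane 0 2 (by decide)]),
      Finset.card_insert_of_notMem (by simp [hane 1 2 (by decide)]), Finset.card_singleton]
  have hD0c : D0.card = 2 * 0 + 4 := by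
    rw [hD0, Finset.card_insert_of_notMem (by simp [hca 0, hca 1, hca 2, hS0]), hS0c]
  have hS0D0 : S0 ⊆ D0 := Finset.subset_insert _ _
  have hS0stab : G.IsStableSet S0 := by
    intro u hu z hz
    rw [hS0] at hu hz
    simp only [Finset.mem_insert, Finset.mem_singleton] at hu hz
    rcases hu with rfl | rfl | rfl <;> rcases hz with rfl | rfl | rfl <;> exact hnadj _ _
  have hcD0 : c ∈ (D0 : Set V) := by simp [hD0]
  have hD0conn : (G.induce (D0 : Set V)).Connected := by
    rw [SimpleGraph.connected_iff]
    have key : ∀ z : (D0 : Set V), (G.induce (D0 : Set V)).Reachable z ⟨c, hcD0⟩ := by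
      rintro ⟨z, hz⟩
      have hz' : z = c ∨ z = a 0 ∨ z = a 1 ∨ z = a 2 := by simpa [hD0, hS0] using hz
      rcases hz' with rfl | rfl | rfl | rfl
      · exact SimpleGraph.Reachable.refl _
      · exact SimpleGraph.Adj.reachable (by exact (hadj 0).symm)
      · exact SimpleGraph.Adj.reachable (by exact (hadj 1).symm)
      · exact SimpleGraph.Adj.reachable (by exact (hadj 2).symm)
    exact ⟨fun u v => (key u).trans (key v).symm, ⟨⟨c, hcD0⟩⟩⟩
  obtain ⟨D, S, k, hdom, hDconn, hDc, hSD, hS, hSc⟩ :=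
    grow G hconn (Fintype.card V) D0 S0 0 (Nat.le_add_right _ _) hS0D0 hS0stab hD0conn hD0c hS0c
  -- stable set inside the induced graph
  let emb : {x // x ∈ S} ↪ (D : Set V) :=
    ⟨fun x => ⟨x.1, by exact_mod_cast hSD x.2⟩, by
      intro x y h
      exact Subtype.ext (congrArg (fun z : (D : Set V) => z.1) h)⟩
  have hs' : (G.induce (D : Set V)).IsStableSet (S.attach.map emb) := by
    intro u hu z hz hadj'
    simp only [Finset.mem_map, Finset.mem_attach, true_and] at hu hz
    obtain ⟨⟨u₀, hu₀⟩, rfl⟩ := hu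
    obtain ⟨⟨z₀, hz₀⟩, rfl⟩ := hz
    exact hS u₀ hu₀ z₀ hz₀ hadj'
  have hk3 : k + 3 ≤ (G.induce (D : Set V)).stabilityNumber := by
    have := le_stab (G.induce (D : Set V)) hs'
    rwa [Finset.card_map, Finset.card_attach, hSc] at this
  have hmono : (G.induce (D : Set V)).stabilityNumber ≤ G.stabilityNumber := by
    refine csSup_le ⟨0, ∅, by simp [SimpleGraph.IsStableSet], rfl⟩ ?_
    rintro m ⟨t, ht, rfl⟩
    have hstab : G.IsStableSet (t.map (Function.Embedding.subtype _)) := by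
      intro u hu z hz hadj'
      simp only [Finset.mem_map, Function.Embedding.coe_subtype] at hu hz
      obtain ⟨⟨u₀, hu₀⟩, hu₁, rfl⟩ := hu
      obtain ⟨⟨z₀, hz₀⟩, hz₁, rfl⟩ := hz
      exact ht _ hu₁ _ hz₁ hadj'
    calc t.card = (t.map (Function.Embedding.subtype _)).card := (Finset.card_map _).symm
      _ ≤ _ := le_stab G hstab
  exact ⟨D, k, hdom, hDconn, hDc, hk3, by omega, by omega⟩
end

section
/- Let G be a finite simple graph and let D be a nonempty connected dominating set of G. Then the Hadwiger number of G is at least one more than the Hadwiger number of the graph G − D obtained by deleting the vertices of D, i.e., h(G) ≥ h(G − D) + 1. -/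
/-- `G` has a complete minor of order `k`: there are `k` pairwise disjoint nonempty
vertex sets (branch sets), each inducing a connected subgraph, with an edge of `G`
between any two of them.  Contracting each branch set yields `K_k`. -/
def SimpleGraph.HasCompleteMinor {V : Type*} (G : SimpleGraph V) (k : ℕ) : Prop :=
  ∃ B : Fin k → Set V,
    (∀ i, (B i).Nonempty) ∧
    (∀ i, (G.induce (B i)).Connected) ∧
    (Pairwise fun i j => Disjoint (B i) (B j)) ∧
    (∀ i j, i ≠ j → ∃ u ∈ B i, ∃ v ∈ B j, G.Adj u v)

/-- The Hadwiger number of `G`: the largest `k` such that `K_k` is a minor of `G`. -/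
noncomputable def SimpleGraph.hadwigerNumber {V : Type*} (G : SimpleGraph V) : ℕ :=
  sSup {k | G.HasCompleteMinor k}

lemma hasCompleteMinor_zero {V : Type*} (G : SimpleGraph V) : G.HasCompleteMinor 0 :=
  ⟨Fin.elim0, fun i => i.elim0, fun i => i.elim0, fun i => i.elim0, fun i => i.elim0⟩

lemma hasCompleteMinor_le_card {V : Type*} [Fintype V] {G : SimpleGraph V} {k : ℕ}
    (h : G.HasCompleteMinor k) : k ≤ Fintype.card V := by
  obtain ⟨B, hne, _, hdisj, _⟩ := h
  choose f hf using hne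
  have hinj : Function.Injective f := by
    intro i j hij
    by_contra hij'
    exact (hdisj hij').ne_of_mem (hf i) (hf j) hij
  simpa using Fintype.card_le_of_injective f hinj

/-- An iso between a nested induced subgraph and the induced subgraph on the image. -/
noncomputable def induceInduceIso {V : Type*} (G : SimpleGraph V) (s : Set V)
    (t : Set s) : (G.induce s).induce t ≃g G.induce (Subtype.val '' t) where
  toEquiv := (Equiv.Set.image Subtype.val t Subtype.val_injective)
  map_rel_iff' := by
    rintro ⟨⟨a, ha⟩, hat⟩ ⟨⟨b, hb⟩, hbt⟩
    simp [Equiv.Set.image, Equiv.Set.imageOfInjOn]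

/-- If `D` is a nonempty connected dominating set of a finite simple graph `G`, then
`h(G) ≥ h(G - D) + 1`, where `G - D` is the induced subgraph on `V(G) \ D`. -/
theorem hadwigerNumber_deleteDominatingSet {V : Type*} [Fintype V] [DecidableEq V]
    (G : SimpleGraph V) (D : Finset V) (hne : D.Nonempty)
    (hdom : G.IsDominatingSet D) (hconn : (G.induce (D : Set V)).Connected) :
    (G.induce ((D : Set V)ᶜ)).hadwigerNumber + 1 ≤ G.hadwigerNumber := by
  set H := G.induce ((D : Set V)ᶜ) with hH
  set S : Set ℕ := {k | H.HasCompleteMinor k} with hS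
  have hS0 : 0 ∈ S := hasCompleteMinor_zero H
  have hSbdd : BddAbove S := ⟨Fintype.card ((D : Set V)ᶜ : Set V),
    fun k hk => hasCompleteMinor_le_card hk⟩
  have hmem : H.HasCompleteMinor H.hadwigerNumber :=
    Nat.sSup_mem ⟨0, hS0⟩ hSbdd
  set k := H.hadwigerNumber with hk
  obtain ⟨B, hBne, hBconn, hBdisj, hBadj⟩ := hmem
  -- build branch sets for G
  set B' : Fin (k + 1) → Set V := fun i =>
    Fin.cases (D : Set V) (fun j => Subtype.val '' B j) i with hB'
  have hG : G.HasCompleteMinor (k + 1) := by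
    refine ⟨B', ?_, ?_, ?_, ?_⟩
    · intro i
      refine Fin.cases ?_ (fun j => ?_) i
      · exact ⟨hne.choose, by simpa [B'] using hne.choose_spec⟩
      · exact (hBne j).image _
    · intro i
      refine Fin.cases ?_ (fun j => ?_) i
      · exact hconn
      · exact (induceInduceIso G _ (B j)).connected_iff.mp (hBconn j)
    · intro i j hij
      have key : ∀ j' : Fin k, Disjoint (D : Set V) (Subtype.val '' B j') := by
        intro j'
        rw [Set.disjoint_right]
        rintro x ⟨⟨y, hy⟩, _, rfl⟩
        simpa using hy
      induction i using Fin.cases with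
      | zero =>
        induction j using Fin.cases with
        | zero => exact absurd rfl hij
        | succ j' => simpa [B'] using key j'
      | succ i' =>
        induction j using Fin.cases with
        | zero => simpa [B'] using (key i').symm
        | succ j' =>
          have hij' : i' ≠ j' := fun h => hij (by rw [h])
          simpa [B'] using
            Set.disjoint_image_of_injective Subtype.val_injective (hBdisj hij')
    · have dom : ∀ j : Fin k, ∃ u ∈ (D : Set V), ∃ v ∈ Subtype.val '' B j, G.Adj u v := by
        intro j
        obtain ⟨⟨v, hv⟩, hvB⟩ := hBne j
        rcases hdom v with hvD | ⟨u, huD, huv⟩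
        · exact absurd hvD (by simpa using hv)
        · exact ⟨u, huD, v, ⟨⟨v, hv⟩, hvB, rfl⟩, huv⟩
      intro i j hij
      induction i using Fin.cases with
      | zero =>
        induction j using Fin.cases with
        | zero => exact absurd rfl hij
        | succ j' => simpa [B'] using dom j'
      | succ i' =>
        induction j using Fin.cases with
        | zero =>
          obtain ⟨u, hu, v, hv, huv⟩ := dom i'
          exact ⟨v, by simpa [B'] using hv, u, by simpa [B'] using hu, huv.symm⟩
        | succ j' =>
          have hij' : i' ≠ j' := fun h => hij (by rw [h])
          obtain ⟨u, hu, v, hv, huv⟩ := hBadj i' j' hij'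
          refine ⟨u.val, ?_, v.val, ?_, huv⟩
          · show u.val ∈ B' i'.succ
            simp only [B', Fin.cases_succ]
            exact ⟨u, hu, rfl⟩
          · show v.val ∈ B' j'.succ
            simp only [B', Fin.cases_succ]
            exact ⟨v, hv, rfl⟩
  exact le_csSup ⟨Fintype.card V, fun m hm => hasCompleteMinor_le_card hm⟩ hG
end

section
/- Let G be a finite simple connected graph that contains an induced subgraph isomorphic to the claw K_{1,3}. Then there exists a set D of vertices of G with |D| ≤ 2α(G) − 2 such that h(G) ≥ h(G − D) + 1, where G − D is the induced subgraph on V(G) \ D. -/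
section Aux

variable {V : Type*}

lemma aux_hasCompleteMinor_zero (G : SimpleGraph V) : G.HasCompleteMinor 0 :=
  ⟨fun i => i.elim0, fun i => i.elim0, fun i => i.elim0, fun i => i.elim0, fun i => i.elim0⟩

lemma aux_bddAbove_minor [Finite V] (G : SimpleGraph V) :
    BddAbove {k | G.HasCompleteMinor k} := by
  refine ⟨Nat.card V, ?_⟩
  rintro k ⟨B, hne, -, hdisj, -⟩
  choose g hg using hne
  have hinj : Function.Injective g := by
    intro i j hij
    by_contra hne'
    exact Set.disjoint_left.mp (hdisj hne') (hg i) (hij ▸ hg j)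
  calc k = Nat.card (Fin k) := by simp
    _ ≤ Nat.card V := Nat.card_le_card_of_injective g hinj

lemma aux_minor_mem [Finite V] (G : SimpleGraph V) :
    G.HasCompleteMinor G.hadwigerNumber :=
  Nat.sSup_mem (s := {k | G.HasCompleteMinor k}) ⟨0, aux_hasCompleteMinor_zero G⟩
    (aux_bddAbove_minor G)

lemma aux_stable_le [Fintype V] (G : SimpleGraph V) (s : Finset V)
    (hs : G.IsStableSet s) : s.card ≤ G.stabilityNumber := by
  refine le_csSup ⟨Fintype.card V, ?_⟩ ⟨s, hs, rfl⟩
  rintro n ⟨t, -, rfl⟩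
  exact t.card_le_univ

lemma aux_walk_boundary (G : SimpleGraph V) (P : V → Prop) :
    ∀ {a b : V} (_ : G.Walk a b), P a → ¬ P b →
      ∃ w u, P w ∧ ¬ P u ∧ G.Adj w u := by
  intro a b p
  induction p with
  | nil => exact fun h h' => absurd h h'
  | @cons a c b h q ih =>
    intro ha hb
    by_cases hc : P c
    · exact ih hc hb
    · exact ⟨a, c, ha, hc, h⟩

/-- The key greedy growing lemma: a connected induced set `D` containing a stable set `I`
with `|D| + 2 ≤ 2|I|` can be grown to a dominating such pair. -/
lemma aux_grow {V : Type*} [Fintype V] [DecidableEq V] (G : SimpleGraph V)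
    (hconn : G.Connected) :
    ∀ (n : ℕ) (D I : Finset V), (Finset.univ \ D).card ≤ n →
      (G.induce (D : Set V)).Connected → G.IsStableSet I → I ⊆ D →
      D.card + 2 ≤ 2 * I.card →
      ∃ D' I' : Finset V, (G.induce (D' : Set V)).Connected ∧ G.IsStableSet I' ∧
        I' ⊆ D' ∧ D'.card + 2 ≤ 2 * I'.card ∧
        (∀ v, v ∉ D' → ∃ u ∈ D', G.Adj u v) := by
  intro n
  induction n with
  | zero =>
    intro D I hcard hDconn hI hID hinv
    refine ⟨D, I, hDconn, hI, hID, hinv, fun v hv => absurd ?_ hv⟩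
    have : Finset.univ \ D = ∅ := Finset.card_eq_zero.mp (Nat.le_zero.mp hcard)
    by_contra hvD
    have : v ∈ Finset.univ \ D := Finset.mem_sdiff.mpr ⟨Finset.mem_univ v, hvD⟩
    simp_all
  | succ n ih =>
    intro D I hcard hDconn hI hID hinv
    by_cases hdom : ∀ v, v ∉ D → ∃ u ∈ D, G.Adj u v
    · exact ⟨D, I, hDconn, hI, hID, hinv, hdom⟩
    push_neg at hdom
    obtain ⟨v, hvD, hvadj⟩ := hdom
    have hIpos : 0 < I.card := by omega
    obtain ⟨d, hdI⟩ := Finset.card_pos.mp hIpos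
    have hdD : d ∈ D := hID hdI
    -- the "closed neighborhood" predicate
    set P : V → Prop := fun x => x ∈ D ∨ ∃ y ∈ D, G.Adj y x with hP
    have hPd : P d := Or.inl hdD
    have hPv : ¬ P v := by
      rintro (h | ⟨y, hy, hadj⟩)
      · exact hvD h
      · exact hvadj y hy hadj
    obtain ⟨p⟩ := hconn.preconnected d v
    obtain ⟨w, u, hPw, hPu, hadj⟩ := aux_walk_boundary G P p hPd hPv
    have huD : u ∉ D := fun h => hPu (Or.inl h)
    have hwD : w ∉ D := fun h => hPu (Or.inr ⟨w, h, hadj⟩)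
    obtain ⟨d', hd'D, hadjw⟩ : ∃ y ∈ D, G.Adj y w := hPw.resolve_left hwD
    have huw : u ≠ w := fun h => (h ▸ hadj).ne rfl
    have hunadj : ∀ y ∈ D, ¬ G.Adj y u := fun y hy h => hPu (Or.inr ⟨y, hy, h⟩)
    set D' : Finset V := insert u (insert w D) with hD'
    set I' : Finset V := insert u I with hI'
    have huI : u ∉ I := fun h => huD (hID h)
    have hcardD' : D'.card = D.card + 2 := by
      rw [hD', Finset.card_insert_of_notMem (by simp [huw, huD]),
        Finset.card_insert_of_notMem hwD]
    have hcardI' : I'.card = I.card + 1 := Finset.card_insert_of_notMem huI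
    -- stability of I'
    have hI'stable : G.IsStableSet I' := by
      intro a ha b hb
      rcases Finset.mem_insert.mp ha with rfl | haI <;>
        rcases Finset.mem_insert.mp hb with rfl | hbI
      · exact fun h => h.ne rfl
      · exact fun h => hunadj b (hID hbI) h.symm
      · exact fun h => hunadj a (hID haI) h
      · exact hI a haI b hbI
    -- connectivity of D'
    have hpair : (G.induce ({w, u} : Set V)).Connected :=
      SimpleGraph.induce_pair_connected_of_adj hadj
    have hUconn : (G.induce ((D : Set V) ∪ {w, u})).Connected :=
      SimpleGraph.connected_induce_union hDconn.preconnected hpair.preconnected hd'D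
        (by left; rfl) hadjw
    have hsetEq : ((D' : Finset V) : Set V) = (D : Set V) ∪ {w, u} := by
      rw [hD']
      ext x
      simp only [Finset.coe_insert, Set.mem_insert_iff, Finset.mem_coe,
        Set.mem_union, Set.mem_singleton_iff]
      tauto
    have hD'conn : (G.induce (D' : Set V)).Connected := by
      rw [hsetEq]; exact hUconn
    -- measure decreases
    have hD'univ : D'.card ≤ Fintype.card V := by
      simpa using D'.card_le_univ
    have hmeas : (Finset.univ \ D').card ≤ n := by
      rw [Finset.card_sdiff_of_subset (Finset.subset_univ _)] at *
      rw [Finset.card_univ] at *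
      omega
    exact ih D' I' hmeas hD'conn hI'stable
      (by intro a ha; rcases Finset.mem_insert.mp ha with rfl | haI
          · exact Finset.mem_insert_self _ _
          · exact Finset.mem_insert_of_mem (Finset.mem_insert_of_mem (hID haI)))
      (by omega)

/-- Nested induced subgraphs: `(G.induce s).induce t ≃g G.induce (val '' t)`. -/
noncomputable def aux_induceInduceIso (G : SimpleGraph V) (s : Set V) (t : Set s) :
    (G.induce s).induce t ≃g G.induce (Subtype.val '' t) where
  toEquiv := Equiv.Set.image Subtype.val t Subtype.val_injective
  map_rel_iff' := by
    intro a b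
    simp [Equiv.Set.image, Equiv.Set.imageOfInjOn]

end Aux

/-- If `G` is a finite simple connected graph containing an induced claw `K_{1,3}`,
then there is a vertex set `D` with `|D| ≤ 2 α(G) - 2` such that
`h(G) ≥ h(G - D) + 1`, where `G - D` is the induced subgraph on `V(G) \ D`. -/
theorem exists_deletion_set_of_claw {V : Type*} [Fintype V] [DecidableEq V]
    (G : SimpleGraph V) (hconn : G.Connected)
    (hclaw : Nonempty (completeBipartiteGraph (Fin 1) (Fin 3) ↪g G)) :
    ∃ D : Finset V, D.card ≤ 2 * G.stabilityNumber - 2 ∧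
      (G.induce ((D : Set V)ᶜ)).hadwigerNumber + 1 ≤ G.hadwigerNumber := by
  classical
  obtain ⟨f⟩ := hclaw
  set x : V := f (Sum.inl 0) with hx
  set a : Fin 3 → V := fun i => f (Sum.inr i) with ha
  have hinj : Function.Injective f := f.injective
  have haij : ∀ i j : Fin 3, i ≠ j → a i ≠ a j := by
    intro i j hij h
    exact hij (by simpa using hinj h)
  have hxa : ∀ i : Fin 3, x ≠ a i := by
    intro i h
    simpa using hinj h
  have hadjxa : ∀ i : Fin 3, G.Adj x (a i) := by
    intro i
    have := f.map_rel_iff (a := Sum.inl 0) (b := Sum.inr i)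
    exact this.mpr (by simp)
  have hnadja : ∀ i j : Fin 3, ¬ G.Adj (a i) (a j) := by
    intro i j h
    have := f.map_rel_iff (a := Sum.inr i) (b := Sum.inr j)
    simpa using this.mp h
  set I₀ : Finset V := {a 0, a 1, a 2} with hI₀
  set D₀ : Finset V := insert x I₀ with hD₀
  have hmemI₀ : ∀ y ∈ I₀, ∃ i : Fin 3, y = a i := by
    intro y hy
    rcases Finset.mem_insert.mp hy with rfl | hy
    · exact ⟨0, rfl⟩
    rcases Finset.mem_insert.mp hy with rfl | hy
    · exact ⟨1, rfl⟩
    · exact ⟨2, by simpa using hy⟩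
  have hI₀stable : G.IsStableSet I₀ := by
    intro u hu v hv hadj
    obtain ⟨i, rfl⟩ := hmemI₀ u hu
    obtain ⟨j, rfl⟩ := hmemI₀ v hv
    exact hnadja i j hadj
  have hI₀card : I₀.card = 3 := by
    rw [hI₀, Finset.card_insert_of_notMem (by
        simp only [Finset.mem_insert, Finset.mem_singleton]
        push_neg
        exact ⟨haij 0 1 (by decide), haij 0 2 (by decide)⟩),
      Finset.card_insert_of_notMem (by
        simp only [Finset.mem_singleton]
        exact haij 1 2 (by decide)),
      Finset.card_singleton]
  have hxI₀ : x ∉ I₀ := by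
    intro h
    obtain ⟨i, hi⟩ := hmemI₀ x h
    exact hxa i hi
  have hD₀card : D₀.card = 4 := by
    rw [hD₀, Finset.card_insert_of_notMem hxI₀, hI₀card]
  -- connectivity of the claw
  have hD₀conn : (G.induce (D₀ : Set V)).Connected := by
    have c0 : (G.induce ({x, a 0} : Set V)).Connected :=
      SimpleGraph.induce_pair_connected_of_adj (hadjxa 0)
    have c1 : (G.induce ({x, a 1} : Set V)).Connected :=
      SimpleGraph.induce_pair_connected_of_adj (hadjxa 1)
    have c2 : (G.induce ({x, a 2} : Set V)).Connected :=
      SimpleGraph.induce_pair_connected_of_adj (hadjxa 2)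
    have c01 : (G.induce (({x, a 0} ∪ {x, a 1}) : Set V)).Connected :=
      SimpleGraph.induce_union_connected c0.preconnected c1.preconnected ⟨x, by simp, by simp⟩
    have c012 : (G.induce ((({x, a 0} ∪ {x, a 1}) ∪ {x, a 2}) : Set V)).Connected :=
      SimpleGraph.induce_union_connected c01.preconnected c2.preconnected ⟨x, by simp, by simp⟩
    have hseteq : ((D₀ : Finset V) : Set V) = (({x, a 0} ∪ {x, a 1}) ∪ {x, a 2} : Set V) := by
      rw [hD₀, hI₀]
      ext y
      simp only [Finset.coe_insert, Set.mem_insert_iff, Finset.coe_singleton,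
        Set.mem_singleton_iff, Set.mem_union]
      tauto
    rw [hseteq]
    exact c012
  have hI₀D₀ : I₀ ⊆ D₀ := Finset.subset_insert _ _
  -- grow to a dominating connected set
  obtain ⟨D', I', hD'conn, hI'stable, hI'D', hinv, hdom⟩ :=
    aux_grow G hconn (Finset.univ \ D₀).card D₀ I₀ le_rfl hD₀conn hI₀stable hI₀D₀
      (by rw [hD₀card, hI₀card])
  refine ⟨D', ?_, ?_⟩
  · -- cardinality bound
    have hle : I'.card ≤ G.stabilityNumber := aux_stable_le G I' hI'stable
    omega
  · -- minor bound
    set s : Set V := ((D' : Finset V) : Set V)ᶜ with hs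
    set m : ℕ := (G.induce s).hadwigerNumber with hm
    obtain ⟨B, hBne, hBconn, hBdisj, hBadj⟩ := aux_minor_mem (G.induce s)
    have hI'ne : I'.Nonempty := Finset.card_pos.mp (by omega)
    have hD'ne : D'.Nonempty := ⟨hI'ne.choose, hI'D' hI'ne.choose_spec⟩
    -- augmented branch sets
    set B' : Fin (m + 1) → Set V :=
      Fin.lastCases ((D' : Finset V) : Set V) (fun i => Subtype.val '' B i) with hB'
    have hB'last : B' (Fin.last m) = ((D' : Finset V) : Set V) := by
      simp [hB']
    have hB'cast : ∀ i : Fin m, B' i.castSucc = Subtype.val '' B i := by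
      intro i; simp [hB']
    have himage_sub : ∀ i : Fin m, Subtype.val '' B i ⊆ s := by
      intro i y hy
      obtain ⟨z, -, rfl⟩ := hy
      exact z.2
    have hminor : G.HasCompleteMinor (m + 1) := by
      refine ⟨B', ?_, ?_, ?_, ?_⟩
      · intro i
        induction i using Fin.lastCases with
        | last => rw [hB'last]; exact ⟨hD'ne.choose, by simpa using hD'ne.choose_spec⟩
        | cast i =>
          rw [hB'cast]
          exact (hBne i).image _
      · intro i
        induction i using Fin.lastCases with
        | last => rw [hB'last]; exact hD'conn
        | cast i =>
          rw [hB'cast]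
          exact ((aux_induceInduceIso G s (B i)).connected_iff).mp (hBconn i)
      · intro i j hij
        induction i using Fin.lastCases with
        | last =>
          induction j using Fin.lastCases with
          | last => exact absurd rfl hij
          | cast j =>
            rw [hB'last, hB'cast]
            rw [Set.disjoint_left]
            intro y hyD hyB
            exact (himage_sub j hyB) hyD
        | cast i =>
          induction j using Fin.lastCases with
          | last =>
            rw [hB'last, hB'cast]
            rw [Set.disjoint_right]
            intro y hyD hyB
            exact (himage_sub i hyB) hyD
          | cast j =>
            rw [hB'cast, hB'cast]
            have hij' : i ≠ j := by
              intro h; exact hij (by rw [h])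
            exact (Set.disjoint_image_iff Subtype.val_injective).mpr (hBdisj hij')
      · intro i j hij
        induction i using Fin.lastCases with
        | last =>
          induction j using Fin.lastCases with
          | last => exact absurd rfl hij
          | cast j =>
            obtain ⟨z, hz⟩ := hBne j
            have hzD : (z : V) ∉ D' := z.2
            obtain ⟨u, huD, hu⟩ := hdom (z : V) hzD
            exact ⟨u, by rw [hB'last]; exact huD, (z : V),
              by rw [hB'cast]; exact ⟨z, hz, rfl⟩, hu⟩
        | cast i =>
          induction j using Fin.lastCases with
          | last =>
            obtain ⟨z, hz⟩ := hBne i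
            have hzD : (z : V) ∉ D' := z.2
            obtain ⟨u, huD, hu⟩ := hdom (z : V) hzD
            exact ⟨(z : V), by rw [hB'cast]; exact ⟨z, hz, rfl⟩, u,
              by rw [hB'last]; exact huD, hu.symm⟩
          | cast j =>
            have hij' : i ≠ j := by
              intro h; exact hij (by rw [h])
            obtain ⟨u, hu, v, hv, huv⟩ := hBadj i j hij'
            refine ⟨(u : V), by rw [hB'cast]; exact ⟨u, hu, rfl⟩,
              (v : V), by rw [hB'cast]; exact ⟨v, hv, rfl⟩, ?_⟩
            simpa using huv
    exact le_csSup (aux_bddAbove_minor G) hminor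
end
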